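/- Let S = {s_1, ..., s_n} be a finite planar point set in general position such that s_1 = (0,0) and all other points have positive x- and y-coordinates, and such that the slopes x_i/y_i of s_2,...,s_n are strictly increasing. Then there exists a point set S' = {t_1,...,t_n} with the same triple orientations as S (with the same labeling) in which the points t_1, ..., t_n have strictly increasing x-coordinates. -/

import Mathlib

lemma my_sign_div_pos (d : ℝ) {y : ℝ} (hy : 0 < y) : Real.sign (d / y) = Real.sign d := by
  rcases lt_trichotomy d 0 with h | h | h
  · rw [Real.sign_of_neg h, Real.sign_of_neg (div_neg_of_neg_of_pos h hy)]
  · simp [h]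
  · rw [Real.sign_of_pos h, Real.sign_of_pos (div_pos h hy)]


/-- Signed twice-area / 3x3 orientation determinant of three planar points. -/
def det3 (p q r : ℝ × ℝ) : ℝ :=
  (q.1 - p.1) * (r.2 - p.2) - (q.2 - p.2) * (r.1 - p.1)

/-- Orientation (chirotope) of a triple of points. -/
noncomputable def chi (p q r : ℝ × ℝ) : ℝ := Real.sign (det3 p q r)

/-- A finite point set is in general position if no three distinct points are collinear. -/
def GenPos (S : Finset (ℝ × ℝ)) : Prop :=
  ∀ p ∈ S, ∀ q ∈ S, ∀ r ∈ S, p ≠ q → q ≠ r → p ≠ r → det3 p q r ≠ 0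

/-- A finite point set is in convex position if every point is a vertex of the hull. -/
def ConvexPos (X : Finset (ℝ × ℝ)) : Prop :=
  ∀ p ∈ X, p ∉ convexHull ℝ ((X.erase p : Finset (ℝ × ℝ)) : Set (ℝ × ℝ))

/-- `X` is a `k`-hole of `S`: a `k`-subset in convex position whose convex hull
contains no point of `S \ X`. -/
def IsHole (S X : Finset (ℝ × ℝ)) (k : ℕ) : Prop :=
  X ⊆ S ∧ X.card = k ∧ ConvexPos X ∧
    ∀ p ∈ S, p ∉ X → p ∉ convexHull ℝ (X : Set (ℝ × ℝ))

/-- Two holes are disjoint if their convex hulls are disjoint. -/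
def DisjHoles (X Y : Finset (ℝ × ℝ)) : Prop :=
  Disjoint (convexHull ℝ (X : Set (ℝ × ℝ))) (convexHull ℝ (Y : Set (ℝ × ℝ)))

lemma det3_cycle (p q r : ℝ × ℝ) : det3 p q r = det3 r p q := by
  unfold det3; ring

lemma det3_self12 (p r : ℝ × ℝ) : det3 p p r = 0 := by unfold det3; ring
lemma det3_self23 (p q : ℝ × ℝ) : det3 p q q = 0 := by unfold det3; ring
lemma det3_self13 (p q : ℝ × ℝ) : det3 p q p = 0 := by unfold det3; ring

lemma det3_proj (p q r : ℝ × ℝ) (hp : p.2 ≠ 0) (hq : q.2 ≠ 0) (hr : r.2 ≠ 0) :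
    det3 (p.1 / p.2, -1 / p.2) (q.1 / q.2, -1 / q.2) (r.1 / r.2, -1 / r.2)
      = det3 p q r / (p.2 * q.2 * r.2) := by
  unfold det3; field_simp; ring

/-- A labeled point set with `s 0 = (0,0)`, all other points in the open positive
quadrant, sorted radially around `s 0` (increasing slopes `x/y`), and in general
position, is order-type equivalent to a point set with strictly increasing
`x`-coordinates. -/
theorem exists_copy_with_increasing_x (n : ℕ) (s : Fin n → ℝ × ℝ)
    (h0 : ∀ i : Fin n, (i : ℕ) = 0 → s i = (0, 0))
    (hpos : ∀ i : Fin n, (i : ℕ) ≠ 0 → 0 < (s i).1 ∧ 0 < (s i).2)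
    (hslope : ∀ i j : Fin n, (i : ℕ) ≠ 0 → i < j →
      (s i).1 / (s i).2 < (s j).1 / (s j).2)
    (hgp : ∀ i j k : Fin n, i ≠ j → j ≠ k → i ≠ k → det3 (s i) (s j) (s k) ≠ 0) :
    ∃ t : Fin n → ℝ × ℝ,
      (∀ i j k : Fin n, chi (t i) (t j) (t k) = chi (s i) (s j) (s k)) ∧
        StrictMono fun i => (t i).1 := by
  classical
  set u : Fin n → ℝ := fun i => (s i).1 / (s i).2 with hu
  set v : Fin n → ℝ := fun i => -1 / (s i).2 with hv
  have hy : ∀ i : Fin n, (i : ℕ) ≠ 0 → 0 < (s i).2 := fun i h => (hpos i h).2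
  -- choice of a
  obtain ⟨A, hA⟩ := Finset.exists_le (Finset.image (fun i => -u i) Finset.univ)
  set a : ℝ := -A - 1 with ha
  have haU : ∀ i : Fin n, a < u i := by
    intro i
    have := hA (-u i) (Finset.mem_image_of_mem _ (Finset.mem_univ i))
    simp only [ha]; linarith
  -- choice of b
  set D : Fin n → Fin n → ℝ := fun i j => (u i - a) * v j - v i * (u j - a) with hD
  obtain ⟨B, hB⟩ := Finset.exists_le (Finset.image
    (fun p : Fin n × Fin n => if u p.1 < u p.2 then D p.1 p.2 / (u p.2 - u p.1) else 0)
    Finset.univ)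
  set b : ℝ := -B - 1 with hb
  have hkey : ∀ i j : Fin n, u i < u j → D i j + b * (u j - u i) < 0 := by
    intro i j hij
    have h1 : D i j / (u j - u i) ≤ B := by
      have := hB _ (Finset.mem_image_of_mem _ (Finset.mem_univ (i, j)))
      simpa [hij] using this
    have h2 : 0 < u j - u i := by linarith
    have h3 : D i j ≤ B * (u j - u i) := by
      rw [div_le_iff₀ h2] at h1; linarith
    have : b * (u j - u i) = -B * (u j - u i) - (u j - u i) := by rw [hb]; ring
    nlinarith
  set t : Fin n → ℝ × ℝ := fun i => if (i : ℕ) = 0 then (a, b) else (u i, v i) with ht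
  -- ordered slopes
  have hult : ∀ i j : Fin n, (i : ℕ) ≠ 0 → (j : ℕ) ≠ 0 → i ≠ j → i < j → u i < u j := by
    intro i j hi _ _ hij
    exact hslope i j hi hij
  have hune : ∀ i j : Fin n, (i : ℕ) ≠ 0 → (j : ℕ) ≠ 0 → i ≠ j → u i ≠ u j := by
    intro i j hi hj hij
    rcases lt_or_gt_of_ne hij with h | h
    · exact ne_of_lt (hult i j hi hj hij h)
    · exact (ne_of_lt (hult j i hj hi hij.symm h)).symm
  -- value of det3 from the origin
  have hdet0 : ∀ i j : Fin n, (i : ℕ) ≠ 0 → (j : ℕ) ≠ 0 →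
      det3 (0, 0) (s i) (s j) = ((s i).2 * (s j).2) * (u i - u j) := by
    intro i j hi hj
    have hyi := (hy i hi).ne'
    have hyj := (hy j hj).ne'
    unfold det3
    simp only [hu]
    field_simp
    ring
  -- value of det3 from (a,b)
  have hdetab : ∀ i j : Fin n,
      det3 (a, b) (u i, v i) (u j, v j) = D i j + b * (u j - u i) := by
    intro i j; unfold det3; simp only [hD]; ring
  -- core lemma
  have hcore : ∀ i j : Fin n, (i : ℕ) ≠ 0 → (j : ℕ) ≠ 0 → i ≠ j →
      Real.sign (det3 (a, b) (t i) (t j)) = Real.sign (det3 (0, 0) (s i) (s j)) := by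
    intro i j hi hj hij
    have hti : t i = (u i, v i) := by simp only [ht]; rw [if_neg hi]
    have htj : t j = (u j, v j) := by simp only [ht]; rw [if_neg hj]
    rw [hti, htj, hdetab, hdet0 i j hi hj]
    have hprod : 0 < (s i).2 * (s j).2 := mul_pos (hy i hi) (hy j hj)
    rcases lt_trichotomy (u i) (u j) with h | h | h
    · rw [Real.sign_of_neg (hkey i j h),
        Real.sign_of_neg (by nlinarith : (s i).2 * (s j).2 * (u i - u j) < 0)]
    · exact absurd h (hune i j hi hj hij)
    · have hij' : D i j + b * (u j - u i) = -(D j i + b * (u i - u j)) := by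
        simp only [hD]; ring
      rw [hij']
      rw [Real.sign_of_pos (by linarith [hkey j i h] : 0 < -(D j i + b * (u i - u j))),
        Real.sign_of_pos (by nlinarith : 0 < (s i).2 * (s j).2 * (u i - u j))]
  have hzero_eq : ∀ i j : Fin n, (i : ℕ) = 0 → (j : ℕ) = 0 → i = j := by
    intro i j hi hj; exact Fin.ext (by omega)
  refine ⟨t, ?_, ?_⟩
  · intro i j k
    by_cases hij : i = j
    · subst hij; unfold chi; rw [det3_self12, det3_self12]
    by_cases hjk : j = k
    · subst hjk; unfold chi; rw [det3_self23, det3_self23]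
    by_cases hik : i = k
    · subst hik; unfold chi; rw [det3_self13, det3_self13]
    unfold chi
    by_cases hi0 : (i : ℕ) = 0
    · have hj0 : (j : ℕ) ≠ 0 := fun h => hij (hzero_eq i j hi0 h)
      have hk0 : (k : ℕ) ≠ 0 := fun h => hik (hzero_eq i k hi0 h)
      have hti : t i = (a, b) := by simp only [ht]; rw [if_pos hi0]
      rw [hti, h0 i hi0]
      exact hcore j k hj0 hk0 hjk
    by_cases hj0 : (j : ℕ) = 0
    · have hk0 : (k : ℕ) ≠ 0 := fun h => hjk (hzero_eq j k hj0 h)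
      have htj : t j = (a, b) := by simp only [ht]; rw [if_pos hj0]
      rw [det3_cycle (t i), det3_cycle (t k), det3_cycle (s i), det3_cycle (s k),
        htj, h0 j hj0]
      exact hcore k i hk0 hi0 (Ne.symm hik)
    by_cases hk0 : (k : ℕ) = 0
    · have htk : t k = (a, b) := by simp only [ht]; rw [if_pos hk0]
      rw [det3_cycle (t i), det3_cycle (s i), htk, h0 k hk0]
      exact hcore i j hi0 hj0 hij
    · -- all nonzero: projective identity
      have hti : t i = (u i, v i) := by simp only [ht]; rw [if_neg hi0]
      have htj : t j = (u j, v j) := by simp only [ht]; rw [if_neg hj0]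
      have htk : t k = (u k, v k) := by simp only [ht]; rw [if_neg hk0]
      rw [hti, htj, htk]
      have := det3_proj (s i) (s j) (s k) (hy i hi0).ne' (hy j hj0).ne' (hy k hk0).ne'
      simp only [hu, hv]
      rw [this]
      exact my_sign_div_pos _ (mul_pos (mul_pos (hy i hi0) (hy j hj0)) (hy k hk0))
  · intro i j hij
    have hj0 : (j : ℕ) ≠ 0 := by omega
    have htj : (t j).1 = u j := by simp only [ht]; rw [if_neg hj0]
    by_cases hi0 : (i : ℕ) = 0
    · have hti : (t i).1 = a := by simp only [ht]; rw [if_pos hi0]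
      simp only [hti, htj]
      exact haU j
    · have hti : (t i).1 = u i := by simp only [ht]; rw [if_neg hi0]
      simp only [hti, htj]
      exact hslope i j hi0 hij
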